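/- Suppose in a bigraded differential algebra (CE^d(k), d, ∘) over F₂ satisfying d² = 0 and the Leibniz rule, the cohomology H^{1−k}(CE(·,k)) vanishes for all k in the range 2 ≤ k ≤ K. Then any two formal complex structures c, c' (sequences c_k, c'_k ∈ CE^{1−k}(k) for 1 ≤ k ≤ K with c₁ = c'₁ and dc_k = ∑_{i=1}^{k−1} c_i ∘ c_{k−i}, similarly for c') are homotopic: there exist h_k ∈ CE^{−k}(k), 1 ≤ k ≤ K, with h₁ = 0 and c_k − c'_k = dh_k + ∑_{i=1}^{k−1}(c'_i ∘ h_{k−i} + h_i ∘ c_{k−i}). -/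

import Mathlib

open Finset in
lemma tri_aux {E : Type} [AddCommMonoid E] (m : ℕ) (g : ℕ → ℕ → ℕ → E) :
    ∑ i ∈ Finset.Icc 1 (m-1), ∑ j ∈ Finset.Icc 1 (i-1), g j (i-j) (m-i)
    = ∑ i ∈ Finset.Icc 1 (m-1), ∑ a ∈ Finset.Icc 1 (m-i-1), g i a (m-i-a) := by
  rw [Finset.sum_sigma' (Finset.Icc 1 (m-1)) (fun i => Finset.Icc 1 (i-1))
        (fun i j => g j (i - j) (m - i)),
      Finset.sum_sigma' (Finset.Icc 1 (m-1)) (fun i => Finset.Icc 1 (m-i-1))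
        (fun i a => g i a (m - i - a))]
  refine Finset.sum_nbij' (fun p => ⟨p.2, p.1 - p.2⟩) (fun p => ⟨p.1 + p.2, p.1⟩) ?_ ?_ ?_ ?_ ?_
  · rintro ⟨i, j⟩ hp
    simp only [Finset.mem_sigma, Finset.mem_Icc] at *
    omega
  · rintro ⟨i, a⟩ hp
    simp only [Finset.mem_sigma, Finset.mem_Icc] at *
    omega
  · rintro ⟨i, j⟩ hp
    simp only [Finset.mem_sigma, Finset.mem_Icc] at hp
    have h1 : j + (i - j) = i := by omega
    simp [h1]
  · rintro ⟨i, a⟩ hp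
    simp only [Finset.mem_sigma, Finset.mem_Icc] at hp
    have h1 : i + a - i = a := by omega
    simp [h1]
  · rintro ⟨i, j⟩ hp
    simp only [Finset.mem_sigma, Finset.mem_Icc] at hp
    have : m - j - (i - j) = m - i := by omega
    simp [this]


/-- Lemma 4.1 of Manolescu–Ozsváth–Thurston: In a bigraded
differential algebra over `F₂` in which the cohomology vanishes in degree
`1−k` for `2 ≤ k ≤ K` (every cocycle in `CE^{1-k}(k)` is the differential of
an element of `CE^{-k}(k)`), any two formal complex structures `c, c'` with
`c₁ = c'₁` are homotopic. -/
theorem formal_complex_structures_homotopic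
    {E : Type} [NonUnitalRing E] [Module (ZMod 2) E]
    (CE : ℤ → ℕ → Submodule (ZMod 2) E)
    (dE : E →ₗ[ZMod 2] E)
    (hd2 : ∀ a, dE (dE a) = 0)
    (hLeib : ∀ a b : E, dE (a * b) = dE a * b + a * dE b)
    (hdgr : ∀ (i : ℤ) (k : ℕ), ∀ x ∈ CE i k, dE x ∈ CE (i + 1) k)
    (hmulgr : ∀ (i j : ℤ) (k l : ℕ), ∀ x ∈ CE i k, ∀ y ∈ CE j l,
      x * y ∈ CE (i + j) (k + l))
    (K : ℕ)
    (hvanish : ∀ k : ℕ, 2 ≤ k → k ≤ K →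
      ∀ x ∈ CE (1 - (k : ℤ)) k, dE x = 0 → ∃ y ∈ CE (-(k : ℤ)) k, dE y = x)
    (c c' : ℕ → E)
    (hc : ∀ m : ℕ, c m ∈ CE (1 - (m : ℤ)) m)
    (hc' : ∀ m : ℕ, c' m ∈ CE (1 - (m : ℤ)) m)
    (hc1 : c 1 = c' 1)
    (hstruct : ∀ m, 1 ≤ m → m ≤ K →
      dE (c m) = ∑ i ∈ Finset.Icc 1 (m - 1), c i * c (m - i))
    (hstruct' : ∀ m, 1 ≤ m → m ≤ K →
      dE (c' m) = ∑ i ∈ Finset.Icc 1 (m - 1), c' i * c' (m - i)) :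
    ∃ h : ℕ → E, h 1 = 0 ∧
      (∀ m : ℕ, 1 ≤ m → m ≤ K → h m ∈ CE (-(m : ℤ)) m) ∧
      (∀ m : ℕ, 1 ≤ m → m ≤ K →
        c m - c' m = dE (h m) + ∑ i ∈ Finset.Icc 1 (m - 1),
          (c' i * h (m - i) + h i * c (m - i))) := by
  classical
  have hchar : ∀ a : E, a + a = 0 := by
    intro a
    rw [← two_nsmul, ← Nat.cast_smul_eq_nsmul (ZMod 2),
      show ((2 : ℕ) : ZMod 2) = 0 by decide, zero_smul]
  have neg_eq : ∀ a : E, -a = a := fun a => neg_eq_of_add_eq_zero_left (hchar a)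
  have sub_eq : ∀ a b : E, a - b = a + b := fun a b => by
    rw [sub_eq_add_neg, neg_eq]
  have h2z : ∀ a : E, (2 : ℤ) • a = 0 := fun a => by rw [two_zsmul]; exact hchar a
  have h2n : ∀ a : E, (2 : ℕ) • a = 0 := fun a => by rw [two_nsmul]; exact hchar a
  suffices H : ∀ N : ℕ, ∃ h : ℕ → E, h 1 = 0 ∧
      (∀ j : ℕ, 1 ≤ j → j ≤ N → j ≤ K → h j ∈ CE (-(j : ℤ)) j) ∧
      (∀ j : ℕ, 1 ≤ j → j ≤ N → j ≤ K →
        c j - c' j = dE (h j) + ∑ i ∈ Finset.Icc 1 (j - 1),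
          (c' i * h (j - i) + h i * c (j - i))) by
    obtain ⟨h, h1, hmem, heq⟩ := H K
    exact ⟨h, h1, fun m hm1 hmK => hmem m hm1 hmK hmK,
      fun m hm1 hmK => heq m hm1 hmK hmK⟩
  intro N
  induction N with
  | zero =>
    exact ⟨fun _ => 0, rfl, fun j hj1 hj0 _ => absurd hj0 (by omega),
      fun j hj1 hj0 _ => absurd hj0 (by omega)⟩
  | succ N IH =>
    obtain ⟨h, h1, hmem, heq⟩ := IH
    by_cases hK : N + 1 ≤ K
    swap
    · exact ⟨h, h1, fun j hj1 hjN hjK => hmem j hj1 (by omega) hjK,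
        fun j hj1 hjN hjK => heq j hj1 (by omega) hjK⟩
    rcases Nat.eq_zero_or_pos N with hN0 | hNpos
    · -- N = 0 : the new index is 1, handled by h itself
      subst hN0
      refine ⟨h, h1, ?_, ?_⟩
      · intro j hj1 hjN _
        have : j = 1 := by omega
        subst this
        rw [h1]
        exact zero_mem _
      · intro j hj1 hjN _
        have : j = 1 := by omega
        subst this
        have hIcc : Finset.Icc 1 0 = (∅ : Finset ℕ) := Finset.Icc_eq_empty (by omega)
        simp [h1, hc1, hIcc]
    -- main case: m = N + 1 ≥ 2
    set m := N + 1 with hm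
    have hm2 : 2 ≤ m := by omega
    have hmK : m ≤ K := hK
    have hm1N : m - 1 = N := by omega
    -- the differential of h j for j ≤ N
    have hdh : ∀ j : ℕ, 1 ≤ j → j ≤ N →
        dE (h j) = c j + c' j + ∑ i ∈ Finset.Icc 1 (j - 1),
          (c' i * h (j - i) + h i * c (j - i)) := by
      intro j hj1 hjN
      have e := heq j hj1 hjN (by omega)
      have e2 : dE (h j) = (c j - c' j) - ∑ i ∈ Finset.Icc 1 (j - 1),
          (c' i * h (j - i) + h i * c (j - i)) := by rw [e]; abel
      rw [e2, sub_eq, sub_eq]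
    -- the cocycle z
    have hsummem : (∑ i ∈ Finset.Icc 1 (m - 1), (c' i * h (m - i) + h i * c (m - i)))
        ∈ CE (1 - (m : ℤ)) m := by
      apply Submodule.sum_mem
      intro i hi
      simp only [Finset.mem_Icc] at hi
      have hmem1 := hmulgr (1 - (i : ℤ)) (-((m - i : ℕ) : ℤ)) i (m - i)
        (c' i) (hc' i) (h (m - i)) (hmem (m - i) (by omega) (by omega) (by omega))
      have hmem2 := hmulgr (-(i : ℤ)) (1 - ((m - i : ℕ) : ℤ)) i (m - i)
        (h i) (hmem i hi.1 (by omega) (by omega)) (c (m - i)) (hc (m - i))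
      have e1 : i + (m - i) = m := by omega
      have e2 : (1 - (i : ℤ)) + (-((m - i : ℕ) : ℤ)) = 1 - (m : ℤ) := by omega
      have e3 : (-(i : ℤ)) + (1 - ((m - i : ℕ) : ℤ)) = 1 - (m : ℤ) := by omega
      rw [e1, e2] at hmem1
      rw [e1, e3] at hmem2
      exact Submodule.add_mem _ hmem1 hmem2
    have hzmem : (c m + c' m + ∑ i ∈ Finset.Icc 1 (m - 1),
        (c' i * h (m - i) + h i * c (m - i))) ∈ CE (1 - (m : ℤ)) m :=
      Submodule.add_mem _ (Submodule.add_mem _ (hc m) (hc' m)) hsummem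
    -- z is a cocycle
    have hdz : dE (c m + c' m + ∑ i ∈ Finset.Icc 1 (m - 1),
        (c' i * h (m - i) + h i * c (m - i))) = 0 := by
      have step1 : dE (c m + c' m + ∑ i ∈ Finset.Icc 1 (m - 1),
            (c' i * h (m - i) + h i * c (m - i)))
          = dE (c m) + dE (c' m) + ∑ i ∈ Finset.Icc 1 (m - 1),
              ((dE (c' i) * h (m - i) + c' i * dE (h (m - i)))
                + (dE (h i) * c (m - i) + h i * dE (c (m - i)))) := by
        rw [map_add, map_add, map_sum]
        refine congrArg _ (Finset.sum_congr rfl fun i hi => ?_)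
        rw [map_add, hLeib, hLeib]
      rw [step1, hstruct m (by omega) hmK, hstruct' m (by omega) hmK]
      have step2 : ∀ i ∈ Finset.Icc 1 (m - 1),
          (dE (c' i) * h (m - i) + c' i * dE (h (m - i)))
            + (dE (h i) * c (m - i) + h i * dE (c (m - i)))
          = (∑ j ∈ Finset.Icc 1 (i - 1), c' j * c' (i - j) * h (m - i))
            + c' i * c (m - i) + c' i * c' (m - i)
            + (∑ a ∈ Finset.Icc 1 (m - i - 1), c' i * (c' a * h (m - i - a)))
            + (∑ a ∈ Finset.Icc 1 (m - i - 1), c' i * (h a * c (m - i - a)))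
            + c i * c (m - i) + c' i * c (m - i)
            + (∑ a ∈ Finset.Icc 1 (i - 1), c' a * h (i - a) * c (m - i))
            + (∑ a ∈ Finset.Icc 1 (i - 1), h a * c (i - a) * c (m - i))
            + (∑ j ∈ Finset.Icc 1 (m - i - 1), h i * (c j * c (m - i - j))) := by
        intro i hi
        simp only [Finset.mem_Icc] at hi
        rw [hstruct' i hi.1 (by omega), hdh (m - i) (by omega) (by omega),
          hdh i hi.1 (by omega), hstruct (m - i) (by omega) (by omega)]
        simp only [mul_add, add_mul, Finset.mul_sum, Finset.sum_mul,
          Finset.sum_add_distrib]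
        abel
      rw [Finset.sum_congr rfl step2]
      simp only [Finset.sum_add_distrib]
      have E1 : (∑ i ∈ Finset.Icc 1 (m - 1), ∑ j ∈ Finset.Icc 1 (i - 1),
            c' j * c' (i - j) * h (m - i))
          = ∑ i ∈ Finset.Icc 1 (m - 1), ∑ a ∈ Finset.Icc 1 (m - i - 1),
            c' i * (c' a * h (m - i - a)) := by
        have t := tri_aux m (fun a b c => c' a * c' b * h c)
        rw [t]
        exact Finset.sum_congr rfl fun i _ => Finset.sum_congr rfl fun a _ =>
          mul_assoc _ _ _
      have E2 : (∑ i ∈ Finset.Icc 1 (m - 1), ∑ a ∈ Finset.Icc 1 (i - 1),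
            c' a * h (i - a) * c (m - i))
          = ∑ i ∈ Finset.Icc 1 (m - 1), ∑ a ∈ Finset.Icc 1 (m - i - 1),
            c' i * (h a * c (m - i - a)) := by
        have t := tri_aux m (fun a b z => c' a * h b * c z)
        rw [t]
        exact Finset.sum_congr rfl fun i _ => Finset.sum_congr rfl fun a _ =>
          mul_assoc _ _ _
      have E3 : (∑ i ∈ Finset.Icc 1 (m - 1), ∑ a ∈ Finset.Icc 1 (i - 1),
            h a * c (i - a) * c (m - i))
          = ∑ i ∈ Finset.Icc 1 (m - 1), ∑ j ∈ Finset.Icc 1 (m - i - 1),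
            h i * (c j * c (m - i - j)) := by
        have t := tri_aux m (fun a b z => h a * c b * c z)
        rw [t]
        exact Finset.sum_congr rfl fun i _ => Finset.sum_congr rfl fun a _ =>
          mul_assoc _ _ _
      rw [E1, E2, ← E3]
      have cancel : ∀ a b x y z w : E,
          a + b + (x + y + b + x + z + a + y + z + w + w) = 0 := by
        intro a b x y z w
        have e : a + b + (x + y + b + x + z + a + y + z + w + w)
            = (a + a) + ((b + b) + ((x + x) + ((y + y) + ((z + z) + (w + w))))) := by
          abel
        rw [e, hchar, hchar, hchar, hchar, hchar, hchar]
        simp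
      exact cancel _ _ _ _ _ _
    obtain ⟨y, hymem, hydE⟩ := hvanish m hm2 hmK _ hzmem hdz
    refine ⟨Function.update h m y, ?_, ?_, ?_⟩
    · rw [Function.update_of_ne (by omega)]
      exact h1
    · intro j hj1 hjm hjK
      rcases eq_or_lt_of_le hjm with hje | hjlt
      · subst hje
        rw [Function.update_self]
        exact hymem
      · rw [Function.update_of_ne (by omega)]
        exact hmem j hj1 (by omega) hjK
    · intro j hj1 hjm hjK
      rcases eq_or_lt_of_le hjm with hje | hjlt
      · subst hje
        have hsum : (∑ i ∈ Finset.Icc 1 (m - 1),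
              (c' i * Function.update h m y (m - i) + Function.update h m y i * c (m - i)))
            = ∑ i ∈ Finset.Icc 1 (m - 1), (c' i * h (m - i) + h i * c (m - i)) := by
          refine Finset.sum_congr rfl fun i hi => ?_
          simp only [Finset.mem_Icc] at hi
          rw [Function.update_of_ne (by omega), Function.update_of_ne (by omega)]
        rw [Function.update_self, hsum, hydE, sub_eq, add_assoc, hchar, add_zero]
      · have hsum : (∑ i ∈ Finset.Icc 1 (j - 1),
              (c' i * Function.update h m y (j - i) + Function.update h m y i * c (j - i)))
            = ∑ i ∈ Finset.Icc 1 (j - 1), (c' i * h (j - i) + h i * c (j - i)) := by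
          refine Finset.sum_congr rfl fun i hi => ?_
          simp only [Finset.mem_Icc] at hi
          rw [Function.update_of_ne (by omega), Function.update_of_ne (by omega)]
        rw [Function.update_of_ne (by omega), hsum]
        exact heq j hj1 (by omega) hjK
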